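/- (Inexact accelerated coupling step, first form.) Let f : R^n → R be differentiable, L-smooth and σ-strongly convex with L, σ > 0. Let τ ∈ (0,1), η = 1/(τL), and ε̃ ≥ 0. Suppose x_{k+1}, y_{k+1}, z_k, z_{k+1} ∈ R^n and g ∈ R^n satisfy ‖g − ∇f(x_{k+1})‖ ≤ ε̃, y_{k+1} = x_{k+1} − (1/L) g, and z_{k+1} = (1/(1+ησ))(z_k + ησ x_{k+1} − η g). Then for every u ∈ R^n: η⟨∇f(x_{k+1}), z_k − u⟩ − (ησ/2)‖u − x_{k+1}‖² ≤ η²L (f(x_{k+1}) − f(y_{k+1})) + (1/2)‖z_k − u‖² − ((1 + ησ/2)/2)‖z_{k+1} − u‖² + ε̃²(η/σ + η²/2). -/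

import Mathlib

open RealInnerProductSpace

lemma my_descent {n : ℕ} (f : EuclideanSpace ℝ (Fin n) → ℝ) (L : ℝ) (hL : 0 < L)
    (hdiff : Differentiable ℝ f)
    (hsmooth : ∀ x y, ‖gradient f x - gradient f y‖ ≤ L * ‖x - y‖)
    (x y : EuclideanSpace ℝ (Fin n)) :
    f y ≤ f x + ⟪gradient f x, y - x⟫ + L / 2 * ‖y - x‖ ^ 2 := by
  set d := y - x with hd
  set ψ : ℝ → ℝ := fun t => f (x + t • d) - t * ⟪gradient f x, d⟫ - L / 2 * t ^ 2 * ‖d‖ ^ 2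
    with hψdef
  have hc : ∀ t : ℝ, HasDerivAt (fun s : ℝ => x + s • d) d t := by
    intro t
    simpa using ((hasDerivAt_id t).smul_const d).const_add x
  have hφ : ∀ t : ℝ, HasDerivAt (fun s : ℝ => f (x + s • d))
      ⟪gradient f (x + t • d), d⟫ t := by
    intro t
    have h1 := (hdiff (x + t • d)).hasGradientAt.hasFDerivAt
    have h2 := h1.comp_hasDerivAt t (hc t)
    simpa [InnerProductSpace.toDual_apply_apply, Function.comp_def] using h2
  have hψ' : ∀ t : ℝ, HasDerivAt ψ
      (⟪gradient f (x + t • d), d⟫ - ⟪gradient f x, d⟫ - L * t * ‖d‖ ^ 2) t := by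
    intro t
    have h2 : HasDerivAt (fun s : ℝ => s * ⟪gradient f x, d⟫) ⟪gradient f x, d⟫ t := by
      simpa using (hasDerivAt_id t).mul_const ⟪gradient f x, d⟫
    have h3 : HasDerivAt (fun s : ℝ => L / 2 * s ^ 2 * ‖d‖ ^ 2) (L * t * ‖d‖ ^ 2) t := by
      have h4 := ((hasDerivAt_pow 2 t).const_mul (L / 2)).mul_const (‖d‖ ^ 2)
      refine h4.congr_deriv ?_
      ring
    exact ((hφ t).sub h2).sub h3
  have hmono : AntitoneOn ψ (Set.Icc (0 : ℝ) 1) := by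
    apply antitoneOn_of_deriv_nonpos (convex_Icc 0 1)
    · exact fun t _ => ((hψ' t).continuousAt).continuousWithinAt
    · exact fun t _ => ((hψ' t).differentiableAt).differentiableWithinAt
    · intro t ht
      rw [interior_Icc] at ht
      rw [(hψ' t).deriv]
      have hb : ⟪gradient f (x + t • d) - gradient f x, d⟫ ≤ L * t * ‖d‖ ^ 2 := by
        calc ⟪gradient f (x + t • d) - gradient f x, d⟫
            ≤ ‖gradient f (x + t • d) - gradient f x‖ * ‖d‖ := real_inner_le_norm _ _
          _ ≤ (L * ‖(x + t • d) - x‖) * ‖d‖ := by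
              gcongr
              exact hsmooth _ _
          _ = L * t * ‖d‖ ^ 2 := by
              have : (x + t • d) - x = t • d := by abel
              rw [this, norm_smul]
              simp [abs_of_nonneg ht.1.le]
              ring
      rw [inner_sub_left] at hb
      linarith
  have hfin := hmono (Set.left_mem_Icc.2 zero_le_one) (Set.right_mem_Icc.2 zero_le_one)
    zero_le_one
  simp only [hψdef, zero_smul, add_zero, one_smul, one_pow, mul_one, mul_zero, zero_mul,
    sub_zero] at hfin
  have hxy : x + d = y := by rw [hd]; abel
  rw [hxy] at hfin
  nlinarith [hfin]

set_option maxHeartbeats 1000000 in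
/-- **inexact accelerated coupling step, first form.** -/
theorem inexact_coupling_step_one {n : ℕ}
    (f : EuclideanSpace ℝ (Fin n) → ℝ) (L σ : ℝ) (hL : 0 < L) (hσ : 0 < σ)
    (hdiff : Differentiable ℝ f)
    (hsmooth : ∀ x y, ‖gradient f x - gradient f y‖ ≤ L * ‖x - y‖)
    (hsc : ∀ x y, f x + ⟪gradient f x, y - x⟫ + σ / 2 * ‖y - x‖ ^ 2 ≤ f y)
    (τ η εt : ℝ) (hτ₀ : 0 < τ) (hτ₁ : τ < 1) (hη : η = 1 / (τ * L)) (hεt : 0 ≤ εt)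
    (xk1 yk1 zk zk1 g : EuclideanSpace ℝ (Fin n))
    (hg : ‖g - gradient f xk1‖ ≤ εt)
    (hy : yk1 = xk1 - (1 / L) • g)
    (hz : zk1 = (1 / (1 + η * σ)) • (zk + (η * σ) • xk1 - η • g)) :
    ∀ u : EuclideanSpace ℝ (Fin n),
      η * ⟪gradient f xk1, zk - u⟫ - η * σ / 2 * ‖u - xk1‖ ^ 2
        ≤ η ^ 2 * L * (f xk1 - f yk1) + 1 / 2 * ‖zk - u‖ ^ 2
          - (1 + η * σ / 2) / 2 * ‖zk1 - u‖ ^ 2 + εt ^ 2 * (η / σ + η ^ 2 / 2) := by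
  intro u
  set G := gradient f xk1 with hG
  set e := g - G with he
  have hηpos : 0 < η := by rw [hη]; positivity
  have ha : (0 : ℝ) < 1 + η * σ := by positivity
  have hge : g = G + e := by rw [he]; abel
  -- key vector relation
  have hp : zk - zk1 = (η * σ) • (zk1 - xk1) + η • g := by
    rw [hz]
    match_scalars <;> field_simp <;> ring
  -- scalar identities
  have h1 : ⟪G, zk - u⟫ = ⟪G, zk - zk1⟫ + ⟪G, zk1 - u⟫ := by
    have h : zk - u = (zk - zk1) + (zk1 - u) := by abel
    rw [h, inner_add_right]
  have h2 : 2 * ⟪zk - zk1, zk1 - u⟫ = ‖zk - u‖ ^ 2 - ‖zk - zk1‖ ^ 2 - ‖zk1 - u‖ ^ 2 := by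
    have hsum : (zk - zk1) + (zk1 - u) = zk - u := by abel
    have h := norm_add_sq_real (zk - zk1) (zk1 - u)
    rw [hsum] at h
    linarith
  have h3 : 2 * ⟪zk1 - xk1, zk1 - u⟫
      = ‖zk1 - xk1‖ ^ 2 + ‖zk1 - u‖ ^ 2 - ‖u - xk1‖ ^ 2 := by
    have hdiff2 : (zk1 - xk1) - (zk1 - u) = u - xk1 := by abel
    have h := norm_sub_sq_real (zk1 - xk1) (zk1 - u)
    rw [hdiff2] at h
    linarith
  have h4 : ⟪zk - zk1, zk1 - u⟫
      = η * σ * ⟪zk1 - xk1, zk1 - u⟫ + η * ⟪G, zk1 - u⟫ + η * ⟪e, zk1 - u⟫ := by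
    rw [hp, inner_add_left, real_inner_smul_left, real_inner_smul_left, hge,
      inner_add_left]
    ring
  have key : η * ⟪G, zk - u⟫ - η * σ / 2 * ‖u - xk1‖ ^ 2
      = η * ⟪G, zk - zk1⟫ + 1 / 2 * ‖zk - u‖ ^ 2 - 1 / 2 * ‖zk - zk1‖ ^ 2
        - (1 + η * σ) / 2 * ‖zk1 - u‖ ^ 2 - η * σ / 2 * ‖zk1 - xk1‖ ^ 2
        - η * ⟪e, zk1 - u⟫ := by
    linear_combination η * h1 + (1 / 2) * h2 - (η * σ / 2) * h3 - h4
  -- Young inequality 1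
  have F3 : η * ⟪G, zk - zk1⟫ ≤ η ^ 2 / 2 * ‖G‖ ^ 2 + 1 / 2 * ‖zk - zk1‖ ^ 2 := by
    have hcs := mul_le_mul_of_nonneg_left (real_inner_le_norm G (zk - zk1)) hηpos.le
    nlinarith [sq_nonneg (η * ‖G‖ - ‖zk - zk1‖)]
  -- Young inequality 2
  have F4 : -(η * ⟪e, zk1 - u⟫) ≤ η / σ * ‖e‖ ^ 2 + η * σ / 4 * ‖zk1 - u‖ ^ 2 := by
    have hcs := mul_le_mul_of_nonneg_left (real_inner_le_norm (-e) (zk1 - u)) hηpos.le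
    rw [inner_neg_left, norm_neg] at hcs
    have hsqr : (0 : ℝ) ≤ η / σ * (‖e‖ - σ / 2 * ‖zk1 - u‖) ^ 2 := by positivity
    have hexp : η / σ * (‖e‖ - σ / 2 * ‖zk1 - u‖) ^ 2
        = η / σ * ‖e‖ ^ 2 - η * (‖e‖ * ‖zk1 - u‖) + η * σ / 4 * ‖zk1 - u‖ ^ 2 := by
      field_simp
      ring
    linarith
  -- error bound
  have F5 : ‖e‖ ^ 2 ≤ εt ^ 2 := by
    nlinarith [hg, norm_nonneg e]
  -- descent lemma consequences
  have hGg : ⟪G, g⟫ = ‖G‖ ^ 2 + ⟪G, e⟫ := by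
    rw [hge, inner_add_right, real_inner_self_eq_norm_sq]
  have hg2 : ‖g‖ ^ 2 = ‖G‖ ^ 2 + 2 * ⟪G, e⟫ + ‖e‖ ^ 2 := by
    rw [hge, norm_add_sq_real]
  have hdesc := my_descent f L hL hdiff hsmooth xk1 yk1
  have hyx : yk1 - xk1 = -((1 / L) • g) := by rw [hy]; abel
  rw [hyx, inner_neg_right, real_inner_smul_right, norm_neg, norm_smul] at hdesc
  have habs : |(1 : ℝ) / L| = 1 / L := abs_of_pos (by positivity)
  rw [Real.norm_eq_abs, habs, mul_pow] at hdesc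
  have hdesc2 : 1 / (2 * L) * ‖G‖ ^ 2 - 1 / (2 * L) * ‖e‖ ^ 2 ≤ f xk1 - f yk1 := by
    have heq : -(1 / L * ⟪G, g⟫) + L / 2 * ((1 / L) ^ 2 * ‖g‖ ^ 2)
        = -(1 / (2 * L)) * ‖G‖ ^ 2 + 1 / (2 * L) * ‖e‖ ^ 2 := by
      rw [hGg, hg2]
      field_simp
      ring
    nlinarith [hdesc, heq]
  have hF1 : η ^ 2 / 2 * ‖G‖ ^ 2 - η ^ 2 / 2 * ‖e‖ ^ 2 ≤ η ^ 2 * L * (f xk1 - f yk1) := by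
    have hmul := mul_le_mul_of_nonneg_left hdesc2 (by positivity : (0 : ℝ) ≤ η ^ 2 * L)
    have hr : η ^ 2 * L * (1 / (2 * L) * ‖G‖ ^ 2 - 1 / (2 * L) * ‖e‖ ^ 2)
        = η ^ 2 / 2 * ‖G‖ ^ 2 - η ^ 2 / 2 * ‖e‖ ^ 2 := by
      field_simp
    linarith
  have hC1 : η ^ 2 / 2 * ‖e‖ ^ 2 ≤ η ^ 2 / 2 * εt ^ 2 :=
    mul_le_mul_of_nonneg_left F5 (by positivity)
  have hC2 : η / σ * ‖e‖ ^ 2 ≤ η / σ * εt ^ 2 :=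
    mul_le_mul_of_nonneg_left F5 (by positivity)
  have hX : (0 : ℝ) ≤ η * σ / 2 * ‖zk1 - xk1‖ ^ 2 := by positivity
  nlinarith [key, F3, F4, hF1, hC1, hC2, hX]
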